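/- For every λ ∈ ℂ \ {0} and every n ≥ 1, the partial sum S_n(λ) = p_0 − λ + Σ_{k=1}^n b_k(λ) p_k admits the product representation S_n(λ) = (p_0 − λ) ∏_{k=1}^n (1 − c_k/λ), where c_k = p_k/q_k ∈ (0,1). -/

import Mathlib

open scoped BigOperators

noncomputable section

/-- Tail sum `q_l = Σ_{k ≥ l} p_k`. -/
def qtail (p : ℕ → ℝ) (l : ℕ) : ℝ := ∑' k, p (l + k)

/-- `b_k(λ) = ∏_{i=0}^{k-1} (λ q_i - p_i)/(λ q_{i+1})`. -/
def bcoef (p : ℕ → ℝ) (lam : ℂ) (k : ℕ) : ℂ :=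
  ∏ i ∈ Finset.range k, (lam * qtail p i - p i) / (lam * qtail p (i + 1))

lemma qtail_summable {p : ℕ → ℝ} (hs : Summable p) (l : ℕ) :
    Summable (fun k => p (l + k)) := by
  have := (summable_nat_add_iff l).mpr hs
  simpa [add_comm] using this

lemma qtail_pos {p : ℕ → ℝ} (hp : ∀ k, 0 < p k) (hs : Summable p) (l : ℕ) :
    0 < qtail p l := by
  exact Summable.tsum_pos (qtail_summable hs l) (fun i => (hp _).le) 0 (hp _)

lemma qtail_rec {p : ℕ → ℝ} (hs : Summable p) (l : ℕ) :
    qtail p l = p l + qtail p (l + 1) := by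
  have h := Summable.tsum_eq_zero_add (qtail_summable hs l)
  simp only [qtail, add_zero] at *
  rw [h]
  congr 1
  apply tsum_congr
  intro k
  congr 1
  omega

lemma qtail_zero {p : ℕ → ℝ} (hsum : HasSum p 1) : qtail p 0 = 1 := by
  simpa [qtail] using hsum.tsum_eq

lemma bcoef_formula (p : ℕ → ℝ) (hp : ∀ k, 0 < p k) (hsum : HasSum p 1)
    (lam : ℂ) (hlam : lam ≠ 0) (k : ℕ) :
    bcoef p lam (k + 1) =
      (lam - (p 0 : ℂ)) / (lam * qtail p (k + 1)) *
        ∏ i ∈ Finset.range k, (1 - ((p (i + 1) / qtail p (i + 1) : ℝ) : ℂ) / lam) := by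
  have hs := hsum.summable
  induction k with
  | zero =>
      simp [bcoef, qtail_zero hsum]
  | succ k ih =>
      have hq1 : (qtail p (k + 1) : ℂ) ≠ 0 := by
        exact_mod_cast (qtail_pos hp hs (k + 1)).ne'
      have hq2 : (qtail p (k + 2) : ℂ) ≠ 0 := by
        exact_mod_cast (qtail_pos hp hs (k + 2)).ne'
      rw [bcoef, Finset.prod_range_succ, ← bcoef, ih, Finset.prod_range_succ]
      push_cast
      field_simp

lemma sum_eq_prod (p : ℕ → ℝ) (hp : ∀ k, 0 < p k) (hsum : HasSum p 1)
    (lam : ℂ) (hlam : lam ≠ 0) (n : ℕ) :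
    (p 0 : ℂ) - lam + ∑ k ∈ Finset.range n, bcoef p lam (k + 1) * (p (k + 1) : ℂ) =
        ((p 0 : ℂ) - lam) *
          ∏ k ∈ Finset.range n, (1 - ((p (k + 1) / qtail p (k + 1) : ℝ) : ℂ) / lam) := by
  have hs := hsum.summable
  induction n with
  | zero => simp
  | succ n ih =>
      have hq1 : (qtail p (n + 1) : ℂ) ≠ 0 := by
        exact_mod_cast (qtail_pos hp hs (n + 1)).ne'
      rw [Finset.sum_range_succ, Finset.prod_range_succ, ← add_assoc, ih,
        bcoef_formula p hp hsum lam hlam]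
      push_cast
      field_simp
      ring

/-- The partial sum `S_n(λ) = p_0 − λ + Σ_{k=1}^n b_k(λ) p_k` admits the product
representation `S_n(λ) = (p_0 − λ) ∏_{k=1}^n (1 − c_k/λ)` with `c_k = p_k/q_k ∈ (0,1)`. -/
theorem partial_sum_product_representation
    (p : ℕ → ℝ) (hp : ∀ k, 0 < p k) (hsum : HasSum p 1)
    (lam : ℂ) (hlam : lam ≠ 0) (n : ℕ) (hn : 1 ≤ n) :
    (p 0 : ℂ) - lam + ∑ k ∈ Finset.range n, bcoef p lam (k + 1) * (p (k + 1) : ℂ) =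
        ((p 0 : ℂ) - lam) *
          ∏ k ∈ Finset.range n, (1 - ((p (k + 1) / qtail p (k + 1) : ℝ) : ℂ) / lam) ∧
      ∀ k : ℕ, 1 ≤ k → p k / qtail p k ∈ Set.Ioo (0 : ℝ) 1 := by
  have hs := hsum.summable
  constructor
  · exact sum_eq_prod p hp hsum lam hlam n
  · intro k hk
    have hqk := qtail_pos hp hs k
    have hqk1 := qtail_pos hp hs (k + 1)
    constructor
    · exact div_pos (hp k) hqk
    · rw [div_lt_one hqk, qtail_rec hs k]
      linarith
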